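/- Let G be a finite abelian group and P : G → G a function. Suppose H ≤ G is a subgroup with {P(y) − a₀ : y ∈ G} ⊆ H for some a₀ ∈ G, and suppose that for some constant ε ≥ 0 we have, for all f : G → ℂ, ‖𝔼_{y∈G} f(x+P(y)) − 𝔼_{z∈H} f(x+a₀+z)‖_{L²(G)} ≤ ε·‖f‖_{L²(G)}. If additionally −a₀ ∈ H (e.g., P has a root in G), then for any A ⊆ G containing no distinct a, b with b − a ∈ P(G), we have (|A|/|G|)² ≤ (|A|/|G|)·(ε + |{y ∈ G : P(y)=0}|/|G|). -/

import Mathlib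

set_option maxHeartbeats 1000000 in
theorem stmt_14 {G : Type*} [AddCommGroup G] [Fintype G] [DecidableEq G]
    (P : G → G) (H : AddSubgroup G) [Fintype H] (a₀ : G)
    (hP : ∀ y : G, P y - a₀ ∈ H) (ε : ℝ) (hε : 0 ≤ ε)
    (hest : ∀ f : G → ℂ,
      Real.sqrt ((∑ x : G, ‖(∑ y : G, f (x + P y)) / (Fintype.card G : ℂ) -
          (∑ z : H, f (x + a₀ + (z : G))) / (Fintype.card H : ℂ)‖ ^ 2) /
        (Fintype.card G : ℝ)) ≤
      ε * Real.sqrt ((∑ x : G, ‖f x‖ ^ 2) / (Fintype.card G : ℝ)))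
    (ha : -a₀ ∈ H)
    (A : Finset G)
    (hA : ∀ a ∈ A, ∀ b ∈ A, a ≠ b → ¬ ∃ y : G, b - a = P y) :
    ((A.card : ℝ) / (Fintype.card G : ℝ)) ^ 2 ≤
      ((A.card : ℝ) / (Fintype.card G : ℝ)) *
        (ε + ((Finset.univ.filter fun y : G => P y = 0).card : ℝ) /
          (Fintype.card G : ℝ)) := by
  classical
  set n : ℝ := (Fintype.card G : ℝ) with hn
  set hc : ℝ := (Fintype.card H : ℝ) with hhc
  set a : ℝ := (A.card : ℝ) with haa
  set Z : ℝ := ((Finset.univ.filter fun y : G => P y = 0).card : ℝ) with hZ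
  have hn0 : (0:ℝ) < n := by
    simp only [hn, Nat.cast_pos]; exact Fintype.card_pos
  have hc0 : (0:ℝ) < hc := by
    simp only [hhc, Nat.cast_pos]; exact Fintype.card_pos
  have ha0 : (0:ℝ) ≤ a := by positivity
  have hZ0 : (0:ℝ) ≤ Z := by positivity
  have ha₀H : a₀ ∈ H := by simpa using H.neg_mem ha
  -- real and complex indicators
  set g : G → ℝ := fun x => if x ∈ A then 1 else 0 with hg
  set f : G → ℂ := fun x => if x ∈ A then 1 else 0 with hf
  have hfg : ∀ x, f x = ((g x : ℝ) : ℂ) := by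
    intro x; simp [hf, hg, apply_ite]
  have hgsum : ∑ x : G, g x = a := by
    simp [hg, haa]
  have hgsq : ∀ x, g x ^ 2 = g x := by
    intro x; by_cases hx : x ∈ A <;> simp [hg, hx]
  have hgnn : ∀ x, 0 ≤ g x := by
    intro x; by_cases hx : x ∈ A <;> simp [hg, hx]
  -- operators
  set S : G → ℝ := fun x => ∑ z : H, g (x + (z : G)) with hS
  set T : G → ℝ := fun x => ∑ y : G, g (x + P y) with hT
  set d : G → ℝ := fun x => T x / n - S x / hc with hd
  -- rewrite the coset sum using a₀ ∈ H
  have hshift : ∀ x : G, (∑ z : H, g (x + a₀ + (z : G))) = S x := by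
    intro x
    refine Fintype.sum_equiv (Equiv.addLeft (⟨a₀, ha₀H⟩ : H)) _ _ ?_
    intro z
    congr 1
    simp only [Equiv.coe_addLeft]
    push_cast
    abel
  -- step B : L² bound on d
  have hestf := hest f
  have hDd : ∀ x : G, (∑ y : G, f (x + P y)) / (Fintype.card G : ℂ) -
      (∑ z : H, f (x + a₀ + (z : G))) / (Fintype.card H : ℂ) = ((d x : ℝ) : ℂ) := by
    intro x
    have c1 : (∑ y : G, f (x + P y)) = ((T x : ℝ) : ℂ) := by
      simp only [hfg, hT]; norm_cast
    have c2 : (∑ z : H, f (x + a₀ + (z : G))) = ((S x : ℝ) : ℂ) := by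
      simp only [hfg]; rw [← hshift x]; norm_cast
    rw [c1, c2, show d x = T x / n - S x / hc from rfl, hn, hhc]
    push_cast
    ring
  have hnormf : ∀ x : G, ‖f x‖ ^ 2 = g x := by
    intro x
    rw [hfg, Complex.norm_real, Real.norm_eq_abs, sq_abs, hgsq]
  have hest2 : Real.sqrt ((∑ x : G, d x ^ 2) / n) ≤ ε * Real.sqrt (a / n) := by
    have h := hestf
    simp only [hDd, hnormf, Complex.norm_real, Real.norm_eq_abs, sq_abs, hgsum] at h
    exact h
  have hdsq : (∑ x : G, d x ^ 2) ≤ ε ^ 2 * a := by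
    have h1 : Real.sqrt ((∑ x : G, d x ^ 2) / n) ^ 2 ≤ (ε * Real.sqrt (a / n)) ^ 2 :=
      pow_le_pow_left₀ (Real.sqrt_nonneg _) hest2 2
    rw [Real.sq_sqrt (by positivity), mul_pow, Real.sq_sqrt (by positivity)] at h1
    have h2 := mul_le_mul_of_nonneg_right h1 hn0.le
    calc (∑ x : G, d x ^ 2) = (∑ x : G, d x ^ 2) / n * n := by field_simp
      _ ≤ ε ^ 2 * (a / n) * n := h2
      _ = ε ^ 2 * a := by field_simp
  -- step G : pattern upper bound
  have hup : ∑ x : G, g x * T x ≤ a * Z := by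
    have hx1 : ∀ x ∈ A, T x ≤ Z := by
      intro x hx
      have e1 : T x = ((Finset.univ.filter fun y : G => x + P y ∈ A).card : ℝ) := by
        simp only [hT, hg]
        rw [Finset.sum_boole]
      have hsub : (Finset.univ.filter fun y : G => x + P y ∈ A)
          ⊆ (Finset.univ.filter fun y : G => P y = 0) := by
        intro y hy
        simp only [Finset.mem_filter, Finset.mem_univ, true_and] at hy ⊢
        by_contra hPy
        have hne : x ≠ x + P y := fun hcontra => hPy (left_eq_add.mp hcontra)
        exact hA x hx (x + P y) hy hne ⟨y, by abel⟩
      rw [e1, hZ]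
      exact_mod_cast Nat.cast_le.mpr (Finset.card_le_card hsub)
    calc ∑ x : G, g x * T x ≤ ∑ x : G, g x * Z := by
          refine Finset.sum_le_sum fun x _ => ?_
          by_cases hx : x ∈ A
          · have hgx : g x = 1 := by simp [hg, hx]
            rw [hgx, one_mul, one_mul]; exact hx1 x hx
          · have hgx : g x = 0 := by simp [hg, hx]
            rw [hgx, zero_mul, zero_mul]
      _ = a * Z := by rw [← Finset.sum_mul, hgsum]
  -- periodicity of S under H
  have hSper : ∀ (x : G) (w' : H), S (x + (w' : G)) = S x := by
    intro x w'
    refine Fintype.sum_equiv (Equiv.addRight w') _ _ ?_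
    intro w
    congr 1
    simp only [Equiv.coe_addRight]
    push_cast
    abel
  -- step F : coset lower bound
  have hSsum : ∑ x : G, S x = hc * a := by
    calc ∑ x : G, S x = ∑ z : H, ∑ x : G, g (x + (z : G)) := Finset.sum_comm
      _ = ∑ z : H, a := by
          refine Finset.sum_congr rfl fun z _ => ?_
          exact (Fintype.sum_bijective (· + (z : G)) (Equiv.addRight (z : G)).bijective
            _ g (fun x => rfl)).trans hgsum
      _ = hc * a := by rw [Finset.sum_const]; simp [hhc, nsmul_eq_mul]
  have hSsq : ∑ x : G, S x ^ 2 = hc * ∑ x : G, g x * S x := by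
    calc ∑ x : G, S x ^ 2 = ∑ x : G, ∑ w' : H, g (x + (w' : G)) * S x := by
          refine Finset.sum_congr rfl fun x _ => ?_
          rw [sq, show S x = ∑ w' : H, g (x + (w' : G)) from rfl, Finset.sum_mul]
      _ = ∑ w' : H, ∑ x : G, g (x + (w' : G)) * S x := Finset.sum_comm
      _ = ∑ w' : H, ∑ x : G, g x * S x := by
          refine Finset.sum_congr rfl fun w' _ => ?_
          refine Fintype.sum_bijective (· + (w' : G)) (Equiv.addRight ((w' : G))).bijective
            _ _ fun x => ?_
          rw [hSper x w']
      _ = hc * ∑ x : G, g x * S x := by rw [Finset.sum_const]; simp [hhc, nsmul_eq_mul]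
  have hlow : a ^ 2 / n ≤ (∑ x : G, g x * S x) / hc := by
    have hcs : (∑ x : G, S x) ^ 2 ≤ (Fintype.card G : ℝ) * ∑ x : G, S x ^ 2 := by
      simpa using sq_sum_le_card_mul_sum_sq (s := (Finset.univ : Finset G)) (f := S)
    rw [hSsum, hSsq, ← hn] at hcs
    rw [div_le_div_iff₀ hn0 hc0]
    nlinarith
  -- Cauchy–Schwarz for the error term
  have hcs2 : (∑ x : G, g x * d x) ^ 2 ≤ (ε * a) ^ 2 := by
    calc (∑ x : G, g x * d x) ^ 2
        ≤ (∑ x : G, g x ^ 2) * ∑ x : G, d x ^ 2 :=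
          Finset.sum_mul_sq_le_sq_mul_sq _ _ _
      _ ≤ a * (ε ^ 2 * a) := by
          have he : ∑ x : G, g x ^ 2 = a := by simp_rw [hgsq]; exact hgsum
          rw [he]
          exact mul_le_mul_of_nonneg_left hdsq ha0
      _ = (ε * a) ^ 2 := by ring
  have h2 : -(∑ x : G, g x * d x) ≤ ε * a := by
    nlinarith [hcs2, mul_nonneg hε ha0, sq_nonneg (ε * a + ∑ x : G, g x * d x)]
  have hgd : ∑ x : G, g x * d x
      = (∑ x : G, g x * T x) / n - (∑ x : G, g x * S x) / hc := by
    calc ∑ x : G, g x * d x = ∑ x : G, (g x * T x / n - g x * S x / hc) := by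
          refine Finset.sum_congr rfl fun x _ => ?_
          rw [show d x = T x / n - S x / hc from rfl]; ring
      _ = (∑ x : G, g x * T x) / n - (∑ x : G, g x * S x) / hc := by
          rw [Finset.sum_sub_distrib, Finset.sum_div, Finset.sum_div]
  -- combine
  have key' : a ^ 2 ≤ ε * a * n + a * Z := by
    have e1 : a ^ 2 / n ≤ a * Z / n + ε * a := by
      calc a ^ 2 / n ≤ (∑ x : G, g x * S x) / hc := hlow
        _ = (∑ x : G, g x * T x) / n - (∑ x : G, g x * d x) := by rw [hgd]; ring
        _ ≤ a * Z / n + ε * a := by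
            have h3 : (∑ x : G, g x * T x) / n ≤ a * Z / n := by gcongr
            linarith
    have e2 := mul_le_mul_of_nonneg_right e1 hn0.le
    calc a ^ 2 = a ^ 2 / n * n := by field_simp
      _ ≤ (a * Z / n + ε * a) * n := e2
      _ = a * Z / n * n + ε * a * n := by ring
      _ = ε * a * n + a * Z := by rw [div_mul_cancel₀ _ hn0.ne']; ring
  calc (a / n) ^ 2 = a ^ 2 / n ^ 2 := by rw [div_pow]
    _ ≤ (a * (ε * n + Z)) / n ^ 2 := by
        gcongr
        nlinarith [key']
    _ = (a / n) * (ε + Z / n) := by field_simp
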